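/- Let h⁽¹⁾, ..., h⁽ᴹ⁾ be i.i.d. randomized classifiers taking values in {1,...,K}, each (as a sequence in n) consistent for a distribution of (X,Y), i.e., Pr(h(X,Z,D_n) ≠ Y) → L* where L* is the Bayes risk. Then the majority-vote classifier h̄⁽ᴹ⁾(x) = argmax_c Σ_{i=1}^M 1[h⁽ⁱ⁾(x) = c] is also consistent: Pr(h̄⁽ᴹ⁾(X) ≠ Y) → L* as n → ∞, for any fixed M. -/

import Mathlib

open MeasureTheory

/-- Majority vote over `M` votes in `{1,...,K}`: a class with maximal count
(ties broken by taking the smallest such class). -/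
noncomputable def majorityVote {M K : ℕ} [NeZero K] (v : Fin M → Fin K) : Fin K :=
  ((Finset.univ : Finset (Fin K)).filter (fun c =>
      ∀ c', (Finset.univ.filter (fun i => v i = c')).card ≤
        (Finset.univ.filter (fun i => v i = c)).card)).min'
    (by
      obtain ⟨c, -, hc⟩ := Finset.exists_max_image (Finset.univ : Finset (Fin K))
        (fun c => (Finset.univ.filter (fun i => v i = c)).card)
        ⟨0, Finset.mem_univ 0⟩
      exact ⟨c, Finset.mem_filter.mpr
        ⟨Finset.mem_univ _, fun c' => hc c' (Finset.mem_univ c')⟩⟩)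

lemma majorityVote_count_le {M K : ℕ} [NeZero K] (v : Fin M → Fin K) (c : Fin K) :
    (Finset.univ.filter (fun i => v i = c)).card ≤
      (Finset.univ.filter (fun i => v i = majorityVote v)).card := by
  have h := Finset.min'_mem ((Finset.univ : Finset (Fin K)).filter (fun c =>
      ∀ c', (Finset.univ.filter (fun i => v i = c')).card ≤
        (Finset.univ.filter (fun i => v i = c)).card)) (by
      obtain ⟨c, -, hc⟩ := Finset.exists_max_image (Finset.univ : Finset (Fin K))
        (fun c => (Finset.univ.filter (fun i => v i = c)).card)
        ⟨0, Finset.mem_univ 0⟩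
      exact ⟨c, Finset.mem_filter.mpr
        ⟨Finset.mem_univ _, fun c' => hc c' (Finset.mem_univ c')⟩⟩)
  rw [Finset.mem_filter] at h
  exact h.2 c

lemma le_K_mul_count {M K : ℕ} [NeZero K] (v : Fin M → Fin K) :
    M ≤ K * (Finset.univ.filter (fun i => v i = majorityVote v)).card := by
  have h1 : (Finset.univ : Finset (Fin M)).card
      = ∑ c : Fin K, (Finset.univ.filter (fun i => v i = c)).card :=
    Finset.card_eq_sum_card_fiberwise (fun i _ => Finset.mem_univ (v i))
  calc M = (Finset.univ : Finset (Fin M)).card := by simp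
    _ = ∑ c : Fin K, (Finset.univ.filter (fun i => v i = c)).card := h1
    _ ≤ ∑ _c : Fin K, (Finset.univ.filter (fun i => v i = majorityVote v)).card :=
        Finset.sum_le_sum (fun c _ => majorityVote_count_le v c)
    _ = K * _ := by simp [Finset.sum_const, mul_comm]

lemma pointwise_excess {M K : ℕ} [NeZero K] (v : Fin M → Fin K)
    (a : ENNReal) (b : Fin K → ENNReal) :
    (M : ENNReal) * (a - b (majorityVote v)) ≤ (K : ENNReal) * ∑ i, (a - b (v i)) := by
  set c := majorityVote v with hc
  have h1 : ((Finset.univ.filter (fun i => v i = c)).card : ENNReal) * (a - b c)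
      ≤ ∑ i, (a - b (v i)) := by
    calc ((Finset.univ.filter (fun i => v i = c)).card : ENNReal) * (a - b c)
        = ∑ i ∈ Finset.univ.filter (fun i => v i = c), (a - b (v i)) := by
          rw [Finset.sum_congr rfl (fun i hi => by
            rw [(Finset.mem_filter.mp hi).2]), Finset.sum_const, nsmul_eq_mul]
      _ ≤ ∑ i, (a - b (v i)) := Finset.sum_le_sum_of_subset (Finset.filter_subset _ _)
  calc (M : ENNReal) * (a - b c)
      ≤ ((K * (Finset.univ.filter (fun i => v i = c)).card : ℕ) : ENNReal) * (a - b c) := by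
        apply mul_le_mul_left
        exact_mod_cast Nat.cast_le.mpr (le_K_mul_count v)
    _ = (K : ENNReal) * (((Finset.univ.filter (fun i => v i = c)).card : ENNReal) * (a - b c)) := by
        push_cast; ring
    _ ≤ (K : ENNReal) * ∑ i, (a - b (v i)) := mul_le_mul_right h1 _

lemma measurable_eta_comp {α : Type*} [MeasurableSpace α] {K : ℕ} [NeZero K]
    {f : α → Fin K} (hf : Measurable f) {η : Fin K → α → ENNReal}
    (hη : ∀ c, Measurable (η c)) : Measurable (fun x => η (f x) x) := by
  have : (fun x => η (f x) x)
      = fun x => ∑ c : Fin K, if f x = c then η c x else 0 := by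
    funext x
    rw [Finset.sum_ite_eq (Finset.univ : Finset (Fin K)) (f x) (fun c => η c x)]
    simp
  rw [this]
  exact Finset.measurable_sum _ (fun c _ =>
    Measurable.ite (hf (measurableSet_singleton c)) (hη c) measurable_const)

noncomputable def argmaxFin {K : ℕ} [NeZero K] {α : Type*} (η : Fin K → α → ENNReal)
    (x : α) : Fin K :=
  ((Finset.univ : Finset (Fin K)).filter (fun c => ∀ c', η c' x ≤ η c x)).min'
    (by
      obtain ⟨c, -, hc⟩ := Finset.exists_max_image (Finset.univ : Finset (Fin K))
        (fun c => η c x) ⟨0, Finset.mem_univ 0⟩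
      exact ⟨c, Finset.mem_filter.mpr
        ⟨Finset.mem_univ _, fun c' => hc c' (Finset.mem_univ c')⟩⟩)

lemma argmaxFin_le {K : ℕ} [NeZero K] {α : Type*} (η : Fin K → α → ENNReal)
    (x : α) (c : Fin K) : η c x ≤ η (argmaxFin η x) x := by
  have h := Finset.min'_mem ((Finset.univ : Finset (Fin K)).filter
    (fun c => ∀ c', η c' x ≤ η c x)) (by
      obtain ⟨c, -, hc⟩ := Finset.exists_max_image (Finset.univ : Finset (Fin K))
        (fun c => η c x) ⟨0, Finset.mem_univ 0⟩
      exact ⟨c, Finset.mem_filter.mpr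
        ⟨Finset.mem_univ _, fun c' => hc c' (Finset.mem_univ c')⟩⟩)
  rw [Finset.mem_filter] at h
  exact h.2 c

lemma measurable_argmaxFin {K : ℕ} [NeZero K] {α : Type*} [MeasurableSpace α]
    {η : Fin K → α → ENNReal} (hη : ∀ c, Measurable (η c)) :
    Measurable (argmaxFin η) := by
  have hP : ∀ b : Fin K, MeasurableSet {x | ∀ c', η c' x ≤ η b x} := by
    intro b
    have : {x | ∀ c', η c' x ≤ η b x} = ⋂ c', {x | η c' x ≤ η b x} := by
      ext x; simp [Set.mem_iInter]
    rw [this]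
    exact MeasurableSet.iInter (fun c' => measurableSet_le (hη c') (hη b))
  apply measurable_to_countable'
  intro c
  have : argmaxFin η ⁻¹' {c} = {x | (∀ c', η c' x ≤ η c x)} ∩
      ⋂ b : Fin K, {x | (∀ c', η c' x ≤ η b x) → c ≤ b} := by
    ext x
    simp only [Set.mem_preimage, Set.mem_singleton_iff, Set.mem_inter_iff,
      Set.mem_iInter, Set.mem_setOf_eq]
    constructor
    · intro h
      subst h
      refine ⟨?_, ?_⟩
      · exact argmaxFin_le η x
      · intro b hb
        exact Finset.min'_le _ b (Finset.mem_filter.mpr ⟨Finset.mem_univ _, hb⟩)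
    · rintro ⟨h1, h2⟩
      apply le_antisymm
      · exact Finset.min'_le _ c (Finset.mem_filter.mpr ⟨Finset.mem_univ _, h1⟩)
      · apply Finset.le_min'
        intro b hb
        exact h2 b (Finset.mem_filter.mp hb).2
  rw [this]
  refine (hP c).inter (MeasurableSet.iInter (fun b => ?_))
  by_cases hcb : c ≤ b
  · have : {x | (∀ c', η c' x ≤ η b x) → c ≤ b} = Set.univ := by
      ext x; simp [hcb]
    rw [this]; exact MeasurableSet.univ
  · have : {x | (∀ c', η c' x ≤ η b x) → c ≤ b} = {x | ∀ c', η c' x ≤ η b x}ᶜ := by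
      ext x; simp [hcb]
    rw [this]; exact (hP b).compl


/-- Lemma 1 (Biau et al. 2008, Prop. 1): if the individual randomized
classifiers `g n (X, Z i)` (with i.i.d. randomizing variables `Z i`,
independent of `(X, Y)`) are consistent, i.e. their error probabilities tend
to the Bayes risk `L*`, then the majority-vote classifier over `M` copies is
consistent as well. -/
theorem majority_vote_consistent {Ω E ZS : Type*} [MeasurableSpace Ω]
    [MeasurableSpace E] [MeasurableSpace ZS]
    (μ : Measure Ω) [IsProbabilityMeasure μ]
    (K : ℕ) [NeZero K] (M : ℕ) (hM : 0 < M)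
    (X : Ω → E) (Y : Ω → Fin K) (Z : Fin M → Ω → ZS)
    (hX : Measurable X) (hY : Measurable Y) (hZ : ∀ i, Measurable (Z i))
    (hZindep : ProbabilityTheory.iIndepFun Z μ)
    (hZid : ∀ i j, ProbabilityTheory.IdentDistrib (Z i) (Z j) μ μ)
    (hZXY : ProbabilityTheory.IndepFun (fun ω => (X ω, Y ω))
      (fun ω => fun i => Z i ω) μ)
    (g : ℕ → E → ZS → Fin K)
    (hg : ∀ n, Measurable (fun p : E × ZS => g n p.1 p.2))
    (Lstar : ℝ)
    (hBayes : ∀ f : E → Fin K, Measurable f →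
      Lstar ≤ (μ {ω | f (X ω) ≠ Y ω}).toReal)
    (hcons : ∀ i : Fin M,
      Filter.Tendsto (fun n => (μ {ω | g n (X ω) (Z i ω) ≠ Y ω}).toReal)
        Filter.atTop (nhds Lstar)) :
    Filter.Tendsto
      (fun n =>
        (μ {ω | majorityVote (fun i => g n (X ω) (Z i ω)) ≠ Y ω}).toReal)
      Filter.atTop (nhds Lstar) := by
  classical
  have hXYm : Measurable (fun ω => (X ω, Y ω)) := hX.prodMk hY
  have hZMm : Measurable (fun ω => fun i => Z i ω) := measurable_pi_lambda _ hZ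
  set ZM : Ω → (Fin M → ZS) := fun ω => fun i => Z i ω with hZM
  set ρ : Measure (E × Fin K) := μ.map (fun ω => (X ω, Y ω)) with hρdef
  set ν : Measure (Fin M → ZS) := μ.map ZM with hνdef
  set PX : Measure E := μ.map X with hPXdef
  haveI : IsProbabilityMeasure ρ := Measure.isProbabilityMeasure_map hXYm.aemeasurable
  haveI : IsProbabilityMeasure ν := Measure.isProbabilityMeasure_map hZMm.aemeasurable
  haveI : IsProbabilityMeasure PX := Measure.isProbabilityMeasure_map hX.aemeasurable
  -- class measures and densities
  set lam : Fin K → Measure E := fun c => (μ.restrict (Y ⁻¹' {c})).map X with hlamdef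
  haveI hfin : ∀ c, IsFiniteMeasure (lam c) := fun c => by
    rw [hlamdef]; infer_instance
  have hac : ∀ c, lam c ≪ PX := by
    intro c
    refine Measure.AbsolutelyContinuous.mk (fun A hA hA0 => ?_)
    rw [hPXdef, Measure.map_apply hX hA] at hA0
    rw [hlamdef, Measure.map_apply hX hA, Measure.restrict_apply (hX hA)]
    exact measure_mono_null Set.inter_subset_left hA0
  set η : Fin K → E → ENNReal := fun c => (lam c).rnDeriv PX with hηdef
  have hηm : ∀ c, Measurable (η c) := fun c => Measure.measurable_rnDeriv _ _
  have hlam_eq : ∀ c (A : Set E), MeasurableSet A → lam c A = ∫⁻ x in A, η c x ∂PX := by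
    intro c A hA
    conv_lhs => rw [← Measure.withDensity_rnDeriv_eq (lam c) PX (hac c)]
    rw [withDensity_apply _ hA]
  set G : (E → Fin K) → ENNReal := fun f => ∫⁻ x, η (f x) x ∂PX with hGdef
  -- key1 : ρ of correctness set equals G f
  have key1 : ∀ f : E → Fin K, Measurable f →
      ρ {q : E × Fin K | f q.1 = q.2} = G f := by
    intro f hf
    have hdec : {q : E × Fin K | f q.1 = q.2}
        = ⋃ c, (f ⁻¹' {c}) ×ˢ ({c} : Set (Fin K)) := by
      ext ⟨x, y⟩
      simp only [Set.mem_setOf_eq, Set.mem_iUnion, Set.mem_prod, Set.mem_preimage,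
        Set.mem_singleton_iff]
      constructor
      · intro h; exact ⟨y, h, rfl⟩
      · rintro ⟨c, h1, rfl⟩; exact h1
    have hmeasc : ∀ c : Fin K, MeasurableSet ((f ⁻¹' {c}) ×ˢ ({c} : Set (Fin K))) :=
      fun c => (hf (measurableSet_singleton c)).prod (measurableSet_singleton c)
    have hdisj : Pairwise (Function.onFun Disjoint fun c : Fin K => (f ⁻¹' {c}) ×ˢ ({c} : Set (Fin K))) := by
      intro c c' hcc'
      refine Set.disjoint_left.mpr ?_
      rintro ⟨x, y⟩ ⟨-, h1⟩ ⟨-, h2⟩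
      simp only [Set.mem_singleton_iff] at h1 h2
      exact hcc' (h1 ▸ h2 ▸ rfl)
    have hpiece : ∀ c : Fin K, ρ ((f ⁻¹' {c}) ×ˢ ({c} : Set (Fin K)))
        = ∫⁻ x in f ⁻¹' {c}, η c x ∂PX := by
      intro c
      rw [hρdef, Measure.map_apply hXYm (hmeasc c)]
      rw [Set.mk_preimage_prod, ← Measure.restrict_apply (hX (hf (measurableSet_singleton c))),
        ← Measure.map_apply hX (hf (measurableSet_singleton c))]
      exact hlam_eq c _ (hf (measurableSet_singleton c))
    rw [hdec, measure_iUnion hdisj hmeasc, tsum_fintype]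
    have hsum : ∀ c : Fin K, ∫⁻ x in f ⁻¹' {c}, η c x ∂PX
        = ∫⁻ x, (f ⁻¹' {c}).indicator (η c) x ∂PX := by
      intro c
      rw [lintegral_indicator (hf (measurableSet_singleton c))]
    calc ∑ c : Fin K, ρ ((f ⁻¹' {c}) ×ˢ ({c} : Set (Fin K)))
        = ∑ c : Fin K, ∫⁻ x, (f ⁻¹' {c}).indicator (η c) x ∂PX := by
          refine Finset.sum_congr rfl (fun c _ => ?_); rw [hpiece c, hsum c]
      _ = ∫⁻ x, ∑ c : Fin K, (f ⁻¹' {c}).indicator (η c) x ∂PX :=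
          (lintegral_finset_sum _ (fun c _ =>
            (hηm c).indicator (hf (measurableSet_singleton c)))).symm
      _ = G f := by
          refine lintegral_congr (fun x => ?_)
          have : ∀ c : Fin K, (f ⁻¹' {c}).indicator (η c) x
              = if f x = c then η c x else 0 := by
            intro c; simp [Set.indicator_apply]
          simp_rw [this]
          rw [Finset.sum_ite_eq (Finset.univ : Finset (Fin K)) (f x) (fun c => η c x)]
          simp
  have hG_le_one : ∀ f : E → Fin K, Measurable f → G f ≤ 1 := by
    intro f hf; rw [← key1 f hf]; exact prob_le_one
  have hsetf : ∀ f : E → Fin K, Measurable f →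
      MeasurableSet {q : E × Fin K | f q.1 = q.2} := by
    intro f hf
    have : {q : E × Fin K | f q.1 = q.2} = ⋃ c, (f ⁻¹' {c}) ×ˢ ({c} : Set (Fin K)) := by
      ext ⟨x, y⟩
      simp only [Set.mem_setOf_eq, Set.mem_iUnion, Set.mem_prod, Set.mem_preimage,
        Set.mem_singleton_iff]
      constructor
      · intro h; exact ⟨y, h, rfl⟩
      · rintro ⟨c, h1, rfl⟩; exact h1
    rw [this]
    exact MeasurableSet.iUnion (fun c =>
      (hf (measurableSet_singleton c)).prod (measurableSet_singleton c))
  have key2ρ : ∀ f : E → Fin K, Measurable f →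
      ρ {q : E × Fin K | f q.1 ≠ q.2} = 1 - G f := by
    intro f hf
    have hc : {q : E × Fin K | f q.1 ≠ q.2} = {q : E × Fin K | f q.1 = q.2}ᶜ := by
      ext q; simp
    rw [hc, prob_compl_eq_one_sub (hsetf f hf), key1 f hf]
  have key2μ : ∀ f : E → Fin K, Measurable f →
      μ {ω | f (X ω) ≠ Y ω} = 1 - G f := by
    intro f hf
    have hne : MeasurableSet {q : E × Fin K | f q.1 ≠ q.2} := by
      have hc : {q : E × Fin K | f q.1 ≠ q.2} = {q : E × Fin K | f q.1 = q.2}ᶜ := by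
        ext q; simp
      rw [hc]; exact (hsetf f hf).compl
    have : {ω | f (X ω) ≠ Y ω}
        = (fun ω => (X ω, Y ω)) ⁻¹' {q : E × Fin K | f q.1 ≠ q.2} := rfl
    rw [this, ← Measure.map_apply hXYm hne, ← hρdef, key2ρ f hf]
  -- the (pseudo-)Bayes classifier
  set gstar : E → Fin K := argmaxFin η with hgstardef
  have hgm : Measurable gstar := measurable_argmaxFin hηm
  set Gmax : ENNReal := G gstar with hGmaxdef
  have hGmax1 : Gmax ≤ 1 := hG_le_one gstar hgm
  have hGmax_ne : Gmax ≠ ⊤ := (lt_of_le_of_lt hGmax1 ENNReal.one_lt_top).ne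
  have hGle : ∀ f : E → Fin K, G f ≤ Gmax :=
    fun f => lintegral_mono (fun x => argmaxFin_le η x (f x))
  -- product structure / Fubini
  have hprod : μ.map (fun ω => (ZM ω, (X ω, Y ω))) = ν.prod ρ := by
    rw [hνdef, hρdef]
    exact (ProbabilityTheory.indepFun_iff_map_prod_eq_prod_map_map
      hZMm.aemeasurable hXYm.aemeasurable).mp hZXY.symm
  -- key3 : randomized error formula
  have hΦm : ∀ h : E × (Fin M → ZS) → Fin K, Measurable h →
      Measurable (fun z => G (fun x => h (x, z))) := by
    intro h hh
    have hF : Measurable (fun p : (Fin M → ZS) × E => η (h (p.2, p.1)) p.2) := by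
      refine measurable_eta_comp (hh.comp (measurable_snd.prodMk measurable_fst))
        (fun c => (hηm c).comp measurable_snd)
    exact hF.lintegral_prod_right'
  have hsect : ∀ (h : E × (Fin M → ZS) → Fin K), Measurable h →
      ∀ z, Measurable (fun x => h (x, z)) :=
    fun h hh z => hh.comp (measurable_id.prodMk measurable_const)
  have key3 : ∀ h : E × (Fin M → ZS) → Fin K, Measurable h →
      μ {ω | h (X ω, ZM ω) ≠ Y ω} = 1 - ∫⁻ z, G (fun x => h (x, z)) ∂ν := by
    intro h hh
    set T : Set ((Fin M → ZS) × (E × Fin K)) := {p | h (p.2.1, p.1) ≠ p.2.2} with hTdef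
    have hT : MeasurableSet T := by
      have : T = (fun p : (Fin M → ZS) × (E × Fin K) => (h (p.2.1, p.1), p.2.2))
          ⁻¹' {q : Fin K × Fin K | q.1 ≠ q.2} := rfl
      rw [this]
      exact ((hh.comp (measurable_snd.fst.prodMk measurable_fst)).prodMk
        measurable_snd.snd) (Set.toFinite _).measurableSet
    have h1 : μ {ω | h (X ω, ZM ω) ≠ Y ω}
        = (μ.map (fun ω => (ZM ω, (X ω, Y ω)))) T := by
      rw [Measure.map_apply (hZMm.prodMk hXYm) hT]
      rfl
    rw [h1, hprod, Measure.prod_apply hT]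
    have h2 : ∀ z, ρ (Prod.mk z ⁻¹' T) = 1 - G (fun x => h (x, z)) := by
      intro z
      have : Prod.mk z ⁻¹' T = {q : E × Fin K | (fun x => h (x, z)) q.1 ≠ q.2} := rfl
      rw [this, key2ρ _ (hsect h hh z)]
    simp_rw [h2]
    rw [lintegral_sub (hΦm h hh) ?fin ?le, lintegral_one, measure_univ]
    case fin =>
      refine ne_top_of_le_ne_top hGmax_ne ?_
      calc ∫⁻ z, G (fun x => h (x, z)) ∂ν ≤ ∫⁻ _, Gmax ∂ν :=
          lintegral_mono (fun z => hGle _)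
        _ = Gmax := by rw [lintegral_const, measure_univ, mul_one]
    case le =>
      exact Filter.Eventually.of_forall (fun z => le_trans (hGle _) hGmax1)
  have hGainle : ∀ h : E × (Fin M → ZS) → Fin K, Measurable h →
      ∫⁻ z, G (fun x => h (x, z)) ∂ν ≤ Gmax := by
    intro h hh
    calc ∫⁻ z, G (fun x => h (x, z)) ∂ν ≤ ∫⁻ _, Gmax ∂ν :=
        lintegral_mono (fun z => hGle _)
      _ = Gmax := by rw [lintegral_const, measure_univ, mul_one]
  -- the classifiers as functions on E × (Fin M → ZS)
  set hbar : ℕ → E × (Fin M → ZS) → Fin K :=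
    fun n p => majorityVote (fun i => g n p.1 (p.2 i)) with hhbardef
  set hone : ℕ → Fin M → E × (Fin M → ZS) → Fin K :=
    fun n i p => g n p.1 (p.2 i) with hhonedef
  have honem : ∀ n i, Measurable (hone n i) := fun n i =>
    (hg n).comp (measurable_fst.prodMk ((measurable_pi_apply i).comp measurable_snd))
  have hbarm : ∀ n, Measurable (hbar n) := by
    intro n
    have h1 : Measurable (fun p : E × (Fin M → ZS) => fun i => g n p.1 (p.2 i)) :=
      measurable_pi_lambda _ (fun i => (hg n).comp
        (measurable_fst.prodMk ((measurable_pi_apply i).comp measurable_snd)))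
    exact (measurable_of_countable majorityVote).comp h1
  set GainBar : ℕ → ENNReal := fun n => ∫⁻ z, G (fun x => hbar n (x, z)) ∂ν with hGainBardef
  set Gain : ℕ → Fin M → ENNReal :=
    fun n i => ∫⁻ z, G (fun x => hone n i (x, z)) ∂ν with hGaindef
  have hGainBar_le : ∀ n, GainBar n ≤ Gmax := fun n => hGainle (hbar n) (hbarm n)
  have hGain_le : ∀ n i, Gain n i ≤ Gmax := fun n i => hGainle (hone n i) (honem n i)
  -- error formulas
  have hEbar : ∀ n, μ {ω | majorityVote (fun i => g n (X ω) (Z i ω)) ≠ Y ω}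
      = 1 - GainBar n := fun n => key3 (hbar n) (hbarm n)
  have hEone : ∀ n i, μ {ω | g n (X ω) (Z i ω) ≠ Y ω} = 1 - Gain n i :=
    fun n i => key3 (hone n i) (honem n i)
  -- main ENNReal inequality
  have hmain : ∀ n, (M : ENNReal) * (Gmax - GainBar n)
      ≤ (K : ENNReal) * ∑ i : Fin M, (Gmax - Gain n i) := by
    intro n
    -- per-z inequality
    have hperz : ∀ z : Fin M → ZS,
        (M : ENNReal) * (Gmax - G (fun x => hbar n (x, z)))
        ≤ (K : ENNReal) * ∑ i : Fin M, (Gmax - G (fun x => hone n i (x, z))) := by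
      intro z
      have hmeasbar : Measurable (fun x => η (hbar n (x, z)) x) :=
        measurable_eta_comp (hsect _ (hbarm n) z) hηm
      have hmeasone : ∀ i, Measurable (fun x => η (hone n i (x, z)) x) :=
        fun i => measurable_eta_comp (hsect _ (honem n i) z) hηm
      have hG_ne : ∀ f : E → Fin K, G f ≠ ⊤ :=
        fun f => ne_top_of_le_ne_top hGmax_ne (hGle f)
      have hsub : ∀ f : E → Fin K, Measurable (fun x => η (f x) x) →
          Gmax - G f = ∫⁻ x, (η (gstar x) x - η (f x) x) ∂PX := by
        intro f hfm
        rw [lintegral_sub hfm (hG_ne f)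
          (Filter.Eventually.of_forall (fun x => argmaxFin_le η x (f x)))]
      have hmeasstar : Measurable (fun x => η (gstar x) x) :=
        measurable_eta_comp hgm hηm
      rw [hsub _ hmeasbar]
      have hrw : ∀ i : Fin M, Gmax - G (fun x => hone n i (x, z))
          = ∫⁻ x, (η (gstar x) x - η (hone n i (x, z)) x) ∂PX :=
        fun i => hsub _ (hmeasone i)
      simp_rw [hrw]
      calc (M : ENNReal) * ∫⁻ x, (η (gstar x) x - η (hbar n (x, z)) x) ∂PX
          = ∫⁻ x, (M : ENNReal) * (η (gstar x) x - η (hbar n (x, z)) x) ∂PX :=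
            (lintegral_const_mul _ (hmeasstar.sub hmeasbar)).symm
        _ ≤ ∫⁻ x, (K : ENNReal) *
              ∑ i : Fin M, (η (gstar x) x - η (hone n i (x, z)) x) ∂PX := by
            refine lintegral_mono (fun x => ?_)
            exact pointwise_excess (fun i => g n x (z i)) (η (gstar x) x)
              (fun c => η c x)
        _ = (K : ENNReal) * ∫⁻ x,
              ∑ i : Fin M, (η (gstar x) x - η (hone n i (x, z)) x) ∂PX :=
            lintegral_const_mul _ (Finset.measurable_sum _
              (fun i _ => hmeasstar.sub (hmeasone i)))
        _ = (K : ENNReal) * ∑ i : Fin M,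
              ∫⁻ x, (η (gstar x) x - η (hone n i (x, z)) x) ∂PX := by
            rw [lintegral_finset_sum _ (f := fun i x => η (gstar x) x - η (hone n i (x, z)) x)
              (fun i _ => hmeasstar.sub (hmeasone i))]
    -- integrate the per-z inequality over z
    have hΦbarm : Measurable (fun z => G (fun x => hbar n (x, z))) := hΦm (hbar n) (hbarm n)
    have hΦonem : ∀ i, Measurable (fun z => G (fun x => hone n i (x, z))) :=
      fun i => hΦm (hone n i) (honem n i)
    have hint_sub : ∀ (h : E × (Fin M → ZS) → Fin K), Measurable h →
        ∫⁻ z, (Gmax - G (fun x => h (x, z))) ∂ν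
          = Gmax - ∫⁻ z, G (fun x => h (x, z)) ∂ν := by
      intro h hh
      rw [lintegral_sub (hΦm h hh)
        (ne_top_of_le_ne_top hGmax_ne (hGainle h hh))
        (Filter.Eventually.of_forall (fun z => hGle _)),
        lintegral_const, measure_univ, mul_one]
    calc (M : ENNReal) * (Gmax - GainBar n)
        = ∫⁻ z, (M : ENNReal) * (Gmax - G (fun x => hbar n (x, z))) ∂ν := by
          rw [lintegral_const_mul _ (f := fun z => Gmax - G (fun x => hbar n (x, z)))
            (measurable_const.sub hΦbarm), hint_sub (hbar n) (hbarm n)]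
      _ ≤ ∫⁻ z, (K : ENNReal) *
            ∑ i : Fin M, (Gmax - G (fun x => hone n i (x, z))) ∂ν :=
          lintegral_mono hperz
      _ = (K : ENNReal) * ∑ i : Fin M, (Gmax - Gain n i) := by
          rw [lintegral_const_mul _
            (f := fun z => ∑ i : Fin M, (Gmax - G (fun x => hone n i (x, z))))
            (Finset.measurable_sum _ (fun i _ => measurable_const.sub (hΦonem i))),
            lintegral_finset_sum _ (f := fun i z => Gmax - G (fun x => hone n i (x, z)))
              (fun i _ => measurable_const.sub (hΦonem i))]
          congr 1
          exact Finset.sum_congr rfl (fun i _ => hint_sub (hone n i) (honem n i))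
  -- pass to real numbers
  set s : ℝ := Gmax.toReal with hsdef
  have htoReal_sub : ∀ a : ENNReal, a ≤ Gmax → (Gmax - a).toReal = s - a.toReal :=
    fun a ha => ENNReal.toReal_sub_of_le ha hGmax_ne
  have hone_toReal : ∀ n i, (μ {ω | g n (X ω) (Z i ω) ≠ Y ω}).toReal
      = 1 - (Gain n i).toReal := by
    intro n i
    rw [hEone n i, ENNReal.toReal_sub_of_le (le_trans (hGain_le n i) hGmax1)
      ENNReal.one_ne_top, ENNReal.toReal_one]
  have hbar_toReal : ∀ n,
      (μ {ω | majorityVote (fun i => g n (X ω) (Z i ω)) ≠ Y ω}).toReal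
      = 1 - (GainBar n).toReal := by
    intro n
    rw [hEbar n, ENNReal.toReal_sub_of_le (le_trans (hGainBar_le n) hGmax1)
      ENNReal.one_ne_top, ENNReal.toReal_one]
  have hLs : Lstar = 1 - s := by
    have h1 : Lstar ≤ 1 - s := by
      have h := hBayes gstar hgm
      rwa [key2μ gstar hgm, ENNReal.toReal_sub_of_le hGmax1 ENNReal.one_ne_top,
        ENNReal.toReal_one] at h
    have h2 : 1 - s ≤ Lstar := by
      refine ge_of_tendsto' (hcons ⟨0, hM⟩) (fun n => ?_)
      rw [hone_toReal n ⟨0, hM⟩]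
      have : (Gain n ⟨0, hM⟩).toReal ≤ s :=
        ENNReal.toReal_mono hGmax_ne (hGain_le n ⟨0, hM⟩)
      linarith
    linarith
  have hai : ∀ i, Filter.Tendsto (fun n => (Gain n i).toReal)
      Filter.atTop (nhds s) := by
    intro i
    have heq : (fun n => (μ {ω | g n (X ω) (Z i ω) ≠ Y ω}).toReal)
        = fun n => 1 - (Gain n i).toReal := funext (fun n => hone_toReal n i)
    have h1 := hcons i
    rw [heq] at h1
    have h2 := Filter.Tendsto.const_sub 1 h1
    simp only [sub_sub_cancel] at h2
    have e2 : 1 - Lstar = s := by rw [hLs]; ring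
    rwa [e2] at h2
  have hmainR : ∀ n, (M : ℝ) * (s - (GainBar n).toReal)
      ≤ (K : ℝ) * ∑ i : Fin M, (s - (Gain n i).toReal) := by
    intro n
    have hRne : (K : ENNReal) * ∑ i : Fin M, (Gmax - Gain n i) ≠ ⊤ := by
      refine ENNReal.mul_ne_top (ENNReal.natCast_ne_top K) ?_
      refine (ENNReal.sum_lt_top.mpr (fun i _ => ?_)).ne
      exact lt_of_le_of_lt tsub_le_self (lt_of_le_of_lt hGmax1 ENNReal.one_lt_top)
    have hR := ENNReal.toReal_mono hRne (hmain n)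
    rw [ENNReal.toReal_mul, ENNReal.toReal_mul, ENNReal.toReal_natCast,
      ENNReal.toReal_natCast,
      ENNReal.toReal_sum (fun i _ => ne_top_of_le_ne_top hGmax_ne tsub_le_self),
      htoReal_sub _ (hGainBar_le n)] at hR
    have hsumeq : ∀ i ∈ (Finset.univ : Finset (Fin M)),
        (Gmax - Gain n i).toReal = s - (Gain n i).toReal :=
      fun i _ => htoReal_sub _ (hGain_le n i)
    rwa [Finset.sum_congr rfl hsumeq] at hR
  have hMpos : (0 : ℝ) < M := Nat.cast_pos.mpr hM
  have hb_ub : ∀ n, (GainBar n).toReal ≤ s :=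
    fun n => ENNReal.toReal_mono hGmax_ne (hGainBar_le n)
  have hb_lb : ∀ n, s - (K : ℝ) / M * ∑ i : Fin M, (s - (Gain n i).toReal)
      ≤ (GainBar n).toReal := by
    intro n
    have h2 : s - (GainBar n).toReal
        ≤ (K : ℝ) / M * ∑ i : Fin M, (s - (Gain n i).toReal) := by
      rw [div_mul_eq_mul_div, le_div_iff₀ hMpos, mul_comm _ (M : ℝ)]
      exact hmainR n
    linarith
  have hsum0 : Filter.Tendsto (fun n => ∑ i : Fin M, (s - (Gain n i).toReal))
      Filter.atTop (nhds 0) := by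
    have : Filter.Tendsto (fun n => ∑ i : Fin M, (s - (Gain n i).toReal))
        Filter.atTop (nhds (∑ _i : Fin M, (0 : ℝ))) := by
      refine tendsto_finset_sum _ (fun i _ => ?_)
      have := Filter.Tendsto.const_sub s (hai i)
      simpa using this
    simpa using this
  have hlow : Filter.Tendsto
      (fun n => s - (K : ℝ) / M * ∑ i : Fin M, (s - (Gain n i).toReal))
      Filter.atTop (nhds s) := by
    have := Filter.Tendsto.const_sub s (Filter.Tendsto.const_mul ((K : ℝ) / M) hsum0)
    simpa using this
  have hbn : Filter.Tendsto (fun n => (GainBar n).toReal) Filter.atTop (nhds s) :=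
    tendsto_of_tendsto_of_tendsto_of_le_of_le hlow tendsto_const_nhds hb_lb hb_ub
  have hgoal : (fun n =>
      (μ {ω | majorityVote (fun i => g n (X ω) (Z i ω)) ≠ Y ω}).toReal)
      = fun n => 1 - (GainBar n).toReal := funext hbar_toReal
  rw [hgoal, hLs]
  exact Filter.Tendsto.const_sub 1 hbn
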